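/- Let n be a natural number, let φ be any basis of the real vector space P_n of polynomials of degree at most n, let D_φ be the differentiation matrix, let V be the (n+1)×(n+1) matrix whose (j,k) entry is the j-th coordinate of X^k/k! in the basis φ, and let J be the (n+1)×(n+1) nilpotent Jordan block with ones on the superdiagonal. Then the matrix D⁺ := V · Jᵀ · V⁻¹ is a generalized inverse of D_φ: it satisfies D_φ · D⁺ · D_φ = D_φ and D⁺ · D_φ · D⁺ = D⁺. -/

import Mathlib

open Matrix

/-- The differentiation map `p ↦ p'` on the space `P_n` of real polynomials of
degree at most `n` (realized as `Polynomial.degreeLT ℝ (n+1)`). -/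
noncomputable def diffMap (n : ℕ) :
    Polynomial.degreeLT ℝ (n + 1) →ₗ[ℝ] Polynomial.degreeLT ℝ (n + 1) :=
  (Polynomial.derivative (R := ℝ)).restrict fun p hp =>
    Polynomial.mem_degreeLT.mpr
      (lt_of_le_of_lt Polynomial.degree_derivative_le (Polynomial.mem_degreeLT.mp hp))

/-- The element `X^k / k!` of `P_n`, for `k ≤ n`. -/
noncomputable def scaledMonomial (n : ℕ) (k : Fin (n + 1)) :
    Polynomial.degreeLT ℝ (n + 1) :=
  ⟨(((k : ℕ).factorial : ℝ))⁻¹ • Polynomial.X ^ (k : ℕ), by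
    rw [Polynomial.mem_degreeLT]
    calc
      Polynomial.degree ((((k : ℕ).factorial : ℝ))⁻¹ • Polynomial.X ^ (k : ℕ))
          ≤ Polynomial.degree (Polynomial.X ^ (k : ℕ) : Polynomial ℝ) :=
        Polynomial.degree_smul_le _ _
      _ = ((k : ℕ) : WithBot ℕ) := Polynomial.degree_X_pow _
      _ < ((n + 1 : ℕ) : WithBot ℕ) := by exact_mod_cast k.2⟩




section AuxSection
open Polynomial

noncomputable def monBasis (n : ℕ) : Module.Basis (Fin (n + 1)) ℝ (Polynomial.degreeLT ℝ (n + 1)) :=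
  Module.Basis.ofEquivFun (Polynomial.degreeLTEquiv ℝ (n + 1))

noncomputable def facUnit (n : ℕ) (k : Fin (n + 1)) : ℝˣ :=
  Units.mk0 (((k : ℕ).factorial : ℝ))⁻¹ (by
    have := Nat.factorial_pos (k : ℕ)
    positivity)

noncomputable def scBasis (n : ℕ) : Module.Basis (Fin (n + 1)) ℝ (Polynomial.degreeLT ℝ (n + 1)) :=
  (monBasis n).unitsSMul (facUnit n)

theorem monBasis_coe (n : ℕ) (k : Fin (n + 1)) :
    ((monBasis n k : Polynomial.degreeLT ℝ (n + 1)) : ℝ[X]) = Polynomial.X ^ (k : ℕ) := by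
  rw [monBasis, Module.Basis.coe_ofEquivFun]
  show ((Polynomial.degreeLTEquiv ℝ (n + 1)).symm (Pi.single k 1) : ℝ[X]) = _
  rw [Polynomial.degreeLTEquiv]
  simp only [LinearEquiv.coe_symm_mk]
  rw [Finset.sum_eq_single k]
  · simp [Polynomial.X_pow_eq_monomial]
  · intro b _ hb
    simp [Pi.single_apply, hb]
  · simp

theorem scBasis_eq (n : ℕ) (k : Fin (n + 1)) : scBasis n k = scaledMonomial n k := by
  apply Subtype.ext
  rw [scBasis, Module.Basis.unitsSMul_apply]
  show (((facUnit n k : ℝ) • monBasis n k : Polynomial.degreeLT ℝ (n+1)) : ℝ[X]) = _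
  rw [scaledMonomial]
  simp [facUnit, monBasis_coe]

theorem diffMap_coe (n : ℕ) (p : Polynomial.degreeLT ℝ (n + 1)) :
    ((diffMap n p : Polynomial.degreeLT ℝ (n + 1)) : ℝ[X]) = Polynomial.derivative (p : ℝ[X]) :=
  rfl

theorem toMatrix_diffMap (n : ℕ) :
    LinearMap.toMatrix (scBasis n) (scBasis n) (diffMap n) =
      Matrix.of fun i j : Fin (n + 1) => if (j : ℕ) = (i : ℕ) + 1 then (1 : ℝ) else 0 := by
  ext i j
  rw [LinearMap.toMatrix_apply, Matrix.of_apply, scBasis, Module.Basis.repr_unitsSMul]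
  rw [monBasis, Module.Basis.ofEquivFun_repr_apply]
  have h1 : (Polynomial.degreeLTEquiv ℝ (n+1)) (diffMap n ((Module.Basis.ofEquivFun (Polynomial.degreeLTEquiv ℝ (n+1))).unitsSMul (facUnit n) j)) i
      = ((diffMap n (scBasis n j) : Polynomial.degreeLT ℝ (n+1)) : ℝ[X]).coeff i := rfl
  rw [h1, scBasis_eq, diffMap_coe, scaledMonomial]
  simp only [Polynomial.derivative_smul, Polynomial.derivative_X_pow, Polynomial.coeff_smul,
    Polynomial.coeff_C_mul, Polynomial.coeff_X_pow, smul_eq_mul]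
  have hfu : ((facUnit n i)⁻¹ : ℝˣ) = (((i : ℕ).factorial : ℝ)) := by
    simp [facUnit]
  rw [Units.smul_def, hfu]
  by_cases h : (j : ℕ) = (i : ℕ) + 1
  · rw [h]
    simp only [Nat.add_sub_cancel, if_pos rfl, if_pos h, mul_one]
    rw [Nat.factorial_succ]
    have h0 : (((i:ℕ).factorial : ℝ)) ≠ 0 := by positivity
    push_cast
    field_simp
    simp [h0]
  · rw [if_neg h]
    rcases Nat.eq_zero_or_pos (j : ℕ) with h0 | h0
    · simp [h0]
    · have : (i : ℕ) ≠ (j : ℕ) - 1 := by omega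
      simp [this]

end AuxSection


theorem sum_ind (n m : ℕ) (f : Fin (n + 1) → ℝ) :
    (∑ l : Fin (n + 1), (if (l : ℕ) = m then (1 : ℝ) else 0) * f l) =
      if h : m < n + 1 then f ⟨m, h⟩ else 0 := by
  split
  · next h =>
    rw [Finset.sum_eq_single (⟨m, h⟩ : Fin (n + 1))]
    · simp
    · intro b _ hb
      have : (b : ℕ) ≠ m := fun hc => hb (Fin.ext hc)
      simp [this]
    · simp
  · next h =>
    apply Finset.sum_eq_zero
    intro l _
    have : (l : ℕ) ≠ m := by omega
    simp [this]

theorem JJtJ (n : ℕ) :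
    (Matrix.of fun i j : Fin (n + 1) => if (j : ℕ) = (i : ℕ) + 1 then (1 : ℝ) else 0) *
        (Matrix.of fun i j : Fin (n + 1) => if (j : ℕ) = (i : ℕ) + 1 then (1 : ℝ) else 0)ᵀ *
        (Matrix.of fun i j : Fin (n + 1) => if (j : ℕ) = (i : ℕ) + 1 then (1 : ℝ) else 0) =
      Matrix.of fun i j : Fin (n + 1) => if (j : ℕ) = (i : ℕ) + 1 then (1 : ℝ) else 0 := by
  set J : Matrix (Fin (n + 1)) (Fin (n + 1)) ℝ :=
    Matrix.of fun i j => if (j : ℕ) = (i : ℕ) + 1 then (1 : ℝ) else 0 with hJ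
  have hJJt : J * Jᵀ = Matrix.of fun i k : Fin (n + 1) =>
      if (i : ℕ) = (k : ℕ) ∧ (i : ℕ) < n then (1 : ℝ) else 0 := by
    ext i k
    rw [Matrix.mul_apply]
    simp only [hJ, Matrix.of_apply, Matrix.transpose_apply]
    rw [sum_ind n ((i : ℕ) + 1) (fun l => if (l : ℕ) = (k : ℕ) + 1 then (1 : ℝ) else 0)]
    split
    · next h =>
      by_cases hik : (i : ℕ) = (k : ℕ)
      · have hin : (i : ℕ) < n := by omega
        have hkn : (k : ℕ) < n := hik ▸ hin
        simp [hik, hin, hkn]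
      · have h1 : ¬ ((i : ℕ) + 1 = (k : ℕ) + 1) := by omega
        have h2 : ¬ ((i : ℕ) = (k : ℕ) ∧ (i : ℕ) < n) := by tauto
        simp [h1, h2, hik]
    · next h =>
      have h2 : ¬ ((i : ℕ) = (k : ℕ) ∧ (i : ℕ) < n) := by omega
      simp [h2]
  rw [hJJt]
  ext i j
  rw [Matrix.mul_apply]
  simp only [Matrix.of_apply]
  rw [Finset.sum_eq_single i]
  · by_cases hi : (i : ℕ) < n
    · simp [hi]
    · have hij : ¬ ((j : ℕ) = (i : ℕ) + 1) := by omega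
      simp [hJ, hij, hi]
  · intro b _ hb
    have : ¬ ((i : ℕ) = (b : ℕ) ∧ (i : ℕ) < n) := fun hc => hb (Fin.ext hc.1.symm)
    simp [this]
  · simp

/-- For any basis `φ` of `P_n`, with `V` the matrix whose `k`-th column is the
coordinate vector of `X^k/k!` in the basis `φ` and `J` the nilpotent Jordan block,
the matrix `D⁺ = V · Jᵀ · V⁻¹` is a generalized inverse of the differentiation
matrix `D_φ`: it satisfies `D · D⁺ · D = D` and `D⁺ · D · D⁺ = D⁺`. -/
theorem diffMatrix_generalized_inverse
    (n : ℕ) (φ : Module.Basis (Fin (n + 1)) ℝ (Polynomial.degreeLT ℝ (n + 1)))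
    (V J : Matrix (Fin (n + 1)) (Fin (n + 1)) ℝ)
    (hV : ∀ j k, V j k = φ.repr (scaledMonomial n k) j)
    (hJ : ∀ i j, J i j = if (j : ℕ) = (i : ℕ) + 1 then 1 else 0) :
    LinearMap.toMatrix φ φ (diffMap n) * (V * Jᵀ * V⁻¹) *
        LinearMap.toMatrix φ φ (diffMap n) = LinearMap.toMatrix φ φ (diffMap n) ∧
      (V * Jᵀ * V⁻¹) * LinearMap.toMatrix φ φ (diffMap n) * (V * Jᵀ * V⁻¹) =
        V * Jᵀ * V⁻¹ := by
  classical
  set Jm : Matrix (Fin (n + 1)) (Fin (n + 1)) ℝ :=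
    Matrix.of fun i j => if (j : ℕ) = (i : ℕ) + 1 then (1 : ℝ) else 0 with hJm
  have hJeq : J = Jm := by
    ext i j; rw [hJ]; rfl
  have hVeq : V = φ.toMatrix (scBasis n) := by
    ext j k; rw [hV, Module.Basis.toMatrix_apply, scBasis_eq]
  set W := (scBasis n).toMatrix φ with hW
  have hVW : V * W = 1 := by rw [hVeq, hW]; exact Module.Basis.toMatrix_mul_toMatrix_flip _ _
  have hWV : W * V = 1 := by rw [hVeq, hW]; exact Module.Basis.toMatrix_mul_toMatrix_flip _ _
  have hVinv : V⁻¹ = W := Matrix.inv_eq_right_inv hVW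
  have hD : LinearMap.toMatrix φ φ (diffMap n) = V * Jm * W := by
    rw [hVeq, hW, hJm, ← toMatrix_diffMap n,
      basis_toMatrix_mul_linearMap_toMatrix_mul_basis_toMatrix]
  have hcancel : ∀ A : Matrix (Fin (n + 1)) (Fin (n + 1)) ℝ, W * (V * A) = A := fun A => by
    rw [← Matrix.mul_assoc, hWV, Matrix.one_mul]
  have hmul : ∀ A B : Matrix (Fin (n + 1)) (Fin (n + 1)) ℝ,
      (V * A * W) * (V * B * W) = V * (A * B) * W := fun A B => by
    simp only [Matrix.mul_assoc, hcancel]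
  have hJ3 : Jm * Jmᵀ * Jm = Jm := JJtJ n
  have hJt3 : Jmᵀ * Jm * Jmᵀ = Jmᵀ := by
    have h := congrArg Matrix.transpose hJ3
    rw [Matrix.transpose_mul, Matrix.transpose_mul, Matrix.transpose_transpose,
      ← Matrix.mul_assoc] at h
    exact h
  rw [hD, hJeq, hVinv]
  constructor
  · rw [hmul, hmul, hJ3]
  · rw [hmul, hmul, hJt3]
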